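/- arXiv:2011.10777 — 2 statements merged into one kernel-verified Lean document; each statement's English description precedes it below -/
import Mathlib

section
/- (Diaz–Metcalf inequality) Let H be a real or complex inner product space, w ∈ H a unit vector, and v₁,…,v_N ∈ H nonzero vectors. If there is r ≥ 0 with r ≤ Re⟨v_n, w⟩/‖v_n‖ for all n, then r Σ_{n=1}^N ‖v_n‖ ≤ ‖Σ_{n=1}^N v_n‖. -/
open RCLike

theorem stmt13 {𝕜 H : Type*} [RCLike 𝕜] [NormedAddCommGroup H] [InnerProductSpace 𝕜 H]
    (N : ℕ) (w : H) (hw : ‖w‖ = 1) (v : Fin N → H) (hv : ∀ n, v n ≠ 0)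
    (r : ℝ) (hr : 0 ≤ r)
    (h : ∀ n, r ≤ RCLike.re (inner 𝕜 (v n) w : 𝕜) / ‖v n‖) :
    r * ∑ n, ‖v n‖ ≤ ‖∑ n, v n‖ := by
  calc r * ∑ n, ‖v n‖ = ∑ n, r * ‖v n‖ := by rw [Finset.mul_sum]
    _ ≤ ∑ n, RCLike.re (inner 𝕜 (v n) w : 𝕜) := by
        apply Finset.sum_le_sum
        intro n _
        have hn : 0 < ‖v n‖ := norm_pos_iff.mpr (hv n)
        have := h n
        rw [le_div_iff₀ hn] at this
        linarith
    _ = RCLike.re (inner 𝕜 (∑ n, v n) w : 𝕜) := by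
        rw [sum_inner, map_sum]
    _ ≤ ‖∑ n, v n‖ := by
        have := re_inner_le_norm (𝕜 := 𝕜) (∑ n, v n) w
        rw [hw, mul_one] at this
        exact this
end

section
/- Let M ≥ 2 and define φ₁ : ℝ → ℝ by φ₁(x) = 1 for |x| ≤ M/2, φ₁(x) = F(x)/F(M/2) for x ≥ M/2, and φ₁(x) = F(x)/F(−M/2) for x ≤ −M/2, where F(x) = (1/√π)∫_{−M}^M e^{−(x−y)²} dy. Then sup_{x∈ℝ} |F(x) − φ₁(x)| ≤ erfc(M/2) + erfc(3M/2). -/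
open MeasureTheory Real

noncomputable def erfc (x : ℝ) : ℝ := (2 / Real.sqrt π) * ∫ t in Set.Ioi x, Real.exp (-t^2)

noncomputable def Fconv (M x : ℝ) : ℝ := (1 / Real.sqrt π) * ∫ y in (-M)..M, Real.exp (-(x - y)^2)

noncomputable def phi₁ (M x : ℝ) : ℝ :=
  if |x| ≤ M / 2 then 1
  else if M / 2 ≤ x then Fconv M x / Fconv M (M / 2)
  else Fconv M x / Fconv M (-(M / 2))

section aux

noncomputable def Gg (a : ℝ) : ℝ := ∫ t in Set.Ioi a, Real.exp (-t^2)

lemma g_int : Integrable (fun t : ℝ => Real.exp (-t^2)) := by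
  have := integrable_exp_neg_mul_sq (b := 1) one_pos
  simpa using this

lemma sqrt_pi_pos : 0 < Real.sqrt π := Real.sqrt_pos.2 Real.pi_pos

lemma g_total : (∫ t : ℝ, Real.exp (-t^2)) = Real.sqrt π := by
  have := integral_gaussian 1
  simpa using this

lemma Gg_nonneg (a : ℝ) : 0 ≤ Gg a :=
  setIntegral_nonneg measurableSet_Ioi (fun x _ => (Real.exp_pos _).le)

lemma Gg_anti {a b : ℝ} (h : a ≤ b) : Gg b ≤ Gg a := by
  apply setIntegral_mono_set g_int.integrableOn
  · exact Filter.Eventually.of_forall (fun x => (Real.exp_pos _).le)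
  · exact HasSubset.Subset.eventuallyLE (Set.Ioi_subset_Ioi h)

lemma erfc_eq (a : ℝ) : erfc a = (2 / Real.sqrt π) * Gg a := rfl

lemma erfc_nonneg (a : ℝ) : 0 ≤ erfc a :=
  mul_nonneg (div_nonneg two_pos.le sqrt_pi_pos.le) (Gg_nonneg a)

lemma erfc_anti {a b : ℝ} (h : a ≤ b) : erfc b ≤ erfc a :=
  mul_le_mul_of_nonneg_left (Gg_anti h) (div_nonneg two_pos.le sqrt_pi_pos.le)

lemma Gg_Iic (a : ℝ) : (∫ t in Set.Iic a, Real.exp (-t^2)) = Real.sqrt π - Gg a := by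
  have := intervalIntegral.integral_Iic_add_Ioi (b := a) g_int.integrableOn g_int.integrableOn
  rw [g_total] at this
  unfold Gg; linarith

lemma Gg_interval (a b : ℝ) : (∫ t in a..b, Real.exp (-t^2)) = Gg a - Gg b := by
  rw [← intervalIntegral.integral_Iic_sub_Iic g_int.integrableOn g_int.integrableOn,
    Gg_Iic, Gg_Iic]
  ring

lemma Gg_neg (a : ℝ) : Gg (-a) = Real.sqrt π - Gg a := by
  have : (∫ t in Set.Iic a, Real.exp (-t^2)) = ∫ t in Set.Ioi (-a), Real.exp (-t^2) := by
    rw [← integral_comp_neg_Iic a (fun t => Real.exp (-t^2))]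
    congr 1; ext x; ring_nf
  unfold Gg
  rw [← this, Gg_Iic]
  rfl

lemma Fconv_eq (M x : ℝ) :
    Fconv M x = (1 / Real.sqrt π) * (Gg (x - M) - Gg (x + M)) := by
  unfold Fconv
  rw [intervalIntegral.integral_comp_sub_left (fun t => Real.exp (-t^2)) x, sub_neg_eq_add,
    Gg_interval]

lemma one_sub_Fconv (M x : ℝ) :
    1 - Fconv M x = (erfc (M - x) + erfc (M + x)) / 2 := by
  rw [Fconv_eq, erfc_eq, erfc_eq]
  have h1 : Gg (x - M) = Real.sqrt π - Gg (M - x) := by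
    rw [show x - M = -(M - x) by ring, Gg_neg]
  have h2 : Gg (x + M) = Gg (M + x) := by ring_nf
  rw [h1, h2]
  field_simp
  ring

lemma Fconv_le_one (M x : ℝ) : Fconv M x ≤ 1 := by
  have h := one_sub_Fconv M x
  have := erfc_nonneg (M - x)
  have := erfc_nonneg (M + x)
  linarith

lemma Fconv_nonneg {M : ℝ} (hM : 0 ≤ M) (x : ℝ) : 0 ≤ Fconv M x := by
  rw [Fconv_eq]
  have h := Gg_anti (show x - M ≤ x + M by linarith)
  have := sqrt_pi_pos
  apply mul_nonneg (by positivity)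
  linarith

lemma Fconv_anti {M a b : ℝ} (hM : 0 ≤ M) (ha : 0 ≤ a) (hab : a ≤ b) :
    Fconv M b ≤ Fconv M a := by
  rw [Fconv_eq, Fconv_eq]
  have key : (∫ t in (a + M)..(b + M), Real.exp (-t^2))
      ≤ ∫ t in (a - M)..(b - M), Real.exp (-t^2) := by
    have hcomp : (∫ t in (a - M)..(b - M), Real.exp (-(t + 2*M)^2))
        = ∫ t in (a + M)..(b + M), Real.exp (-t^2) := by
      rw [intervalIntegral.integral_comp_add_right (fun t => Real.exp (-t^2)) (2*M)]
      congr 1 <;> ring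
    rw [← hcomp]
    apply intervalIntegral.integral_mono_on (by linarith)
    · exact (g_int.comp_add_right (2*M)).intervalIntegrable
    · exact g_int.intervalIntegrable
    · intro t ht
      apply Real.exp_le_exp.2
      have h1 : a - M ≤ t := ht.1
      nlinarith
  rw [Gg_interval, Gg_interval] at key
  have := sqrt_pi_pos
  have h2 : Gg (b - M) - Gg (b + M) ≤ Gg (a - M) - Gg (a + M) := by linarith
  apply mul_le_mul_of_nonneg_left h2
  positivity

lemma Fconv_even (M x : ℝ) : Fconv M (-x) = Fconv M x := by
  rw [Fconv_eq, Fconv_eq]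
  rw [show -x - M = -(x + M) by ring, show -x + M = -(x - M) by ring, Gg_neg, Gg_neg]
  ring

lemma Fconv_pos {M : ℝ} (hM : 0 < M) (x : ℝ) : 0 < Fconv M x := by
  rw [Fconv_eq, ← Gg_interval]
  apply mul_pos (by positivity)
  apply intervalIntegral.intervalIntegral_pos_of_pos (g_int.intervalIntegrable)
    (fun t => Real.exp_pos _)
  linarith

lemma key_half {M : ℝ} (hM : 2 ≤ M) :
    1 - Fconv M (M / 2) = (erfc (M / 2) + erfc (3 * M / 2)) / 2 := by
  rw [one_sub_Fconv, show M - M / 2 = M / 2 by ring, show M + M / 2 = 3 * M / 2 by ring]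

lemma case_right {M : ℝ} (hM : 2 ≤ M) {x : ℝ} (hx : M / 2 ≤ x) :
    |Fconv M x - Fconv M x / Fconv M (M / 2)| ≤ erfc (M / 2) + erfc (3 * M / 2) := by
  have hM0 : (0:ℝ) < M := by linarith
  have hc : 0 < Fconv M (M / 2) := Fconv_pos hM0 _
  have hle : Fconv M x ≤ Fconv M (M / 2) := Fconv_anti hM0.le (by linarith) hx
  have hF0 : 0 ≤ Fconv M x := Fconv_nonneg hM0.le x
  have hc1 : Fconv M (M / 2) ≤ 1 := Fconv_le_one M _
  have hq1 : Fconv M x / Fconv M (M / 2) ≤ 1 := (div_le_one hc).2 hle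
  have hq0 : 0 ≤ Fconv M x / Fconv M (M / 2) := div_nonneg hF0 hc.le
  have hqc : Fconv M x / Fconv M (M / 2) * Fconv M (M / 2) = Fconv M x :=
    div_mul_cancel₀ _ hc.ne'
  have hk := key_half hM
  have he1 := erfc_nonneg (M / 2)
  have he2 := erfc_nonneg (3 * M / 2)
  rw [abs_of_nonpos (by nlinarith)]
  nlinarith

end aux

theorem stmt17 (M : ℝ) (hM : 2 ≤ M) :
    ∀ x : ℝ, |Fconv M x - phi₁ M x| ≤ erfc (M / 2) + erfc (3 * M / 2) := by
  intro x
  unfold phi₁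
  split_ifs with h1 h2
  · -- |x| ≤ M/2
    obtain ⟨hxl, hxr⟩ := abs_le.1 h1
    rw [abs_of_nonpos (by linarith [Fconv_le_one M x]), neg_sub]
    have := one_sub_Fconv M x
    have h3 : erfc (M - x) ≤ erfc (M / 2) := erfc_anti (by linarith)
    have h4 : erfc (M + x) ≤ erfc (M / 2) := erfc_anti (by linarith)
    have := erfc_nonneg (3 * M / 2)
    linarith
  · exact case_right hM h2
  · -- x ≤ -M/2
    push_neg at h1 h2
    have hx : M / 2 ≤ -x := by
      rcases abs_cases x with ⟨he, _⟩ | ⟨he, _⟩ <;> [linarith; linarith]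
    have h5 : Fconv M (-(M/2)) = Fconv M (M/2) := Fconv_even M (M/2)
    have h6 : Fconv M x = Fconv M (-x) := (Fconv_even M x).symm
    rw [h5, h6]
    exact case_right hM hx
end
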